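/- Underconditioning bias: for disjoint sets of binary variables X, Y, Z with strictly positive joint distribution, the difference between the interaction of X conditioned on Y=0, Z=0 and the interaction of X conditioned only on Z=0 equals the iterated Boolean derivative (over the variables of X) of the pointwise mutual information pmi(X=x, Y=0 | Z=0) = log[ p(X=x, Y=0 | Z=0) / ( p(X=x|Z=0) p(Y=0|Z=0) ) ]. -/

import Mathlib

open Finset

/-- The Boolean (discrete) partial derivative of `f` with respect to variable `i`. -/
def boolDeriv {ι : Type*} [DecidableEq ι] (i : ι) (f : (ι → Bool) → ℝ) :
    (ι → Bool) → ℝ :=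
  fun x => f (Function.update x i true) - f (Function.update x i false)

/-- The iterated Boolean derivative with respect to a list of variables. -/
def iterBoolDeriv {ι : Type*} [DecidableEq ι] :
    List ι → ((ι → Bool) → ℝ) → ((ι → Bool) → ℝ)
  | [], f => f
  | i :: l, f => boolDeriv i (iterBoolDeriv l f)

/-- Probability of the event that the variables in `X` take the values prescribed by
`x`, the variables in `Y` are all `0`, and the variables in `Z` are all `0`
(marginalising over all remaining variables). -/
def prEvent {ι : Type*} [Fintype ι] [DecidableEq ι] (p : (ι → Bool) → ℝ)
    (X Y Z : Finset ι) (x : ι → Bool) : ℝ :=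
  ∑ σ ∈ Finset.univ.filter (fun σ : ι → Bool =>
      (∀ i ∈ X, σ i = x i) ∧ (∀ i ∈ Y, σ i = false) ∧ (∀ i ∈ Z, σ i = false)), p σ

lemma iterBoolDeriv_sub {ι : Type*} [DecidableEq ι] (l : List ι)
    (f g : (ι → Bool) → ℝ) :
    iterBoolDeriv l (fun x => f x - g x) =
      fun x => iterBoolDeriv l f x - iterBoolDeriv l g x := by
  induction l generalizing f g with
  | nil => rfl
  | cons i l ih =>
    simp only [iterBoolDeriv, ih]
    funext x
    simp only [boolDeriv]
    ring

lemma prEvent_pos {ι : Type*} [Fintype ι] [DecidableEq ι]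
    (p : (ι → Bool) → ℝ) (hpos : ∀ σ, 0 < p σ)
    (X Y Z : Finset ι) (hXY : Disjoint X Y) (hXZ : Disjoint X Z)
    (x : ι → Bool) : 0 < prEvent p X Y Z x := by
  apply Finset.sum_pos (fun σ _ => hpos σ)
  refine ⟨fun i => if i ∈ X then x i else false, ?_⟩
  simp only [Finset.mem_filter, Finset.mem_univ, true_and]
  refine ⟨fun i hi => if_pos hi, fun i hi => ?_, fun i hi => ?_⟩
  · exact if_neg (fun h => (Finset.disjoint_left.mp hXY) h hi)
  · exact if_neg (fun h => (Finset.disjoint_left.mp hXZ) h hi)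

/-- Underconditioning bias: for disjoint sets `X`, `Y`, `Z` of binary variables
(within a finite collection `S` with strictly positive joint distribution `p`), the
difference between the interaction of `X` conditioned on `Y = 0, Z = 0` and the
interaction of `X` conditioned only on `Z = 0` equals the iterated Boolean
derivative, over the variables of `X`, of the pointwise mutual information
`pmi(X = x, Y = 0 | Z = 0)
  = log [ p(X=x, Y=0 | Z=0) / (p(X=x | Z=0) · p(Y=0 | Z=0)) ]`. -/
theorem underconditioning_bias {ι : Type*} [Fintype ι] [DecidableEq ι]
    (p : (ι → Bool) → ℝ) (hpos : ∀ σ, 0 < p σ) (hsum : ∑ σ, p σ = 1)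
    (X Y Z : Finset ι) (hXY : Disjoint X Y) (hXZ : Disjoint X Z)
    (hYZ : Disjoint Y Z)
    (l : List ι) (hl : l.Nodup) (hlX : l.toFinset = X) :
    iterBoolDeriv l
        (fun x => Real.log (prEvent p X Y Z x / prEvent p ∅ Y Z x)) (fun _ => false) -
      iterBoolDeriv l
        (fun x => Real.log (prEvent p X ∅ Z x / prEvent p ∅ ∅ Z x)) (fun _ => false) =
    iterBoolDeriv l
        (fun x => Real.log ((prEvent p X Y Z x / prEvent p ∅ ∅ Z x) /
          ((prEvent p X ∅ Z x / prEvent p ∅ ∅ Z x) *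
            (prEvent p ∅ Y Z x / prEvent p ∅ ∅ Z x)))) (fun _ => false) := by
  have hA := prEvent_pos p hpos X Y Z hXY hXZ
  have hB := prEvent_pos p hpos X ∅ Z (Finset.disjoint_empty_right X) hXZ
  have hC := prEvent_pos p hpos ∅ Y Z (Finset.disjoint_empty_left Y) (Finset.disjoint_empty_left Z)
  have hD := prEvent_pos p hpos ∅ ∅ Z (Finset.disjoint_empty_left ∅) (Finset.disjoint_empty_left Z)
  have key : (fun x => Real.log ((prEvent p X Y Z x / prEvent p ∅ ∅ Z x) /
          ((prEvent p X ∅ Z x / prEvent p ∅ ∅ Z x) *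
            (prEvent p ∅ Y Z x / prEvent p ∅ ∅ Z x)))) =
      fun x => Real.log (prEvent p X Y Z x / prEvent p ∅ Y Z x) -
        Real.log (prEvent p X ∅ Z x / prEvent p ∅ ∅ Z x) := by
    funext x
    rw [Real.log_div (ne_of_gt (div_pos (hA x) (hD x)))
          (ne_of_gt (mul_pos (div_pos (hB x) (hD x)) (div_pos (hC x) (hD x)))),
        Real.log_mul (ne_of_gt (div_pos (hB x) (hD x))) (ne_of_gt (div_pos (hC x) (hD x))),
        Real.log_div (ne_of_gt (hA x)) (ne_of_gt (hD x)),
        Real.log_div (ne_of_gt (hB x)) (ne_of_gt (hD x)),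
        Real.log_div (ne_of_gt (hC x)) (ne_of_gt (hD x)),
        Real.log_div (ne_of_gt (hA x)) (ne_of_gt (hC x))]
    ring
  rw [key, iterBoolDeriv_sub]
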